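/- Let Ω ⊆ ℝ^d be open, let p ∈ ℕ ∪ {∞} with p ≥ 1, let ψ : Ω → Ω be of class C^p on Ω, injective, with derivative ψ′(x) invertible (det[ψ′(x)] ≠ 0) at every x ∈ Ω, and strongly run-away; let ω : Ω → 𝕂 be of class C^p and zero-free (ω(x) ≠ 0 for all x ∈ Ω). Then for every function f : Ω → 𝕂 of class C^p and every compact set K ⊆ Ω there exist N ≥ 1 and a function g : Ω → 𝕂 of class C^p such that g(x) = f(x) for every x ∈ K and C_{ω,ψ}^N g = g, i.e., for every x ∈ Ω, (∏_{j=0}^{N−1} ω(ψ_j(x)))·g(ψ_N(x)) = g(x). -/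

import Mathlib

open Set Function
open scoped Manifold


/-- If `ψ` is an injective `C^p` self-map of the open set `Ω ⊆ ℝ^d` with everywhere
invertible derivative which is strongly run-away, and `ω` is a zero-free `C^p` multiplier,
then every `C^p` function `f` agrees on any given compact set `K ⊆ Ω` with some `C^p`
function `g` which is a periodic point of `C_{ω,ψ}`: `C_{ω,ψ}^N g = g` for some `N ≥ 1`. -/
theorem stmt_8 {𝕂 : Type*} [RCLike 𝕂] {d : ℕ} (Ω : Set (Fin d → ℝ)) (hΩ : IsOpen Ω)
    (p : ℕ∞) (hp : 1 ≤ p)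
    (ψ : (Fin d → ℝ) → (Fin d → ℝ)) (hmaps : Set.MapsTo ψ Ω Ω)
    (hψ : ContDiffOn ℝ p ψ Ω) (hinj : Set.InjOn ψ Ω)
    (hdet : ∀ x ∈ Ω, (fderivWithin ℝ ψ Ω x).det ≠ 0)
    (hsra : ∀ K : Set (Fin d → ℝ), K ⊆ Ω → IsCompact K →
      ∃ N : ℕ, ∀ n, N ≤ n → (ψ^[n] '' K) ∩ K = ∅)
    (ω : (Fin d → ℝ) → 𝕂) (hω : ContDiffOn ℝ p ω Ω) (hω0 : ∀ x ∈ Ω, ω x ≠ 0) :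
    ∀ f : (Fin d → ℝ) → 𝕂, ContDiffOn ℝ p f Ω →
      ∀ K : Set (Fin d → ℝ), IsCompact K → K ⊆ Ω →
        ∃ N : ℕ, 1 ≤ N ∧ ∃ g : (Fin d → ℝ) → 𝕂, ContDiffOn ℝ p g Ω ∧
          (∀ x ∈ K, g x = f x) ∧
          ∀ x ∈ Ω, (∏ j ∈ Finset.range N, ω (ψ^[j] x)) * g (ψ^[N] x) = g x := by
  classical
  intro f hf K hK hKΩ
  have hp' : (p : WithTop ℕ∞) ≠ 0 := by exact_mod_cast (zero_lt_one.trans_le hp).ne'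
  -- basic facts about iterates
  have hmapsn : ∀ n, Set.MapsTo (ψ^[n]) Ω Ω := fun n => hmaps.iterate n
  have hinjn : ∀ n, Set.InjOn (ψ^[n]) Ω := fun n => hinj.iterate hmaps n
  have hiter : ∀ n, ContDiffOn ℝ p (ψ^[n]) Ω := by
    intro n
    induction n with
    | zero => simpa using contDiffOn_id
    | succ k ih =>
        rw [Function.iterate_succ]
        exact ih.comp hψ hmaps
  -- the derivative is everywhere invertible
  have hDA : ∀ a ∈ Ω, ∃ e : (Fin d → ℝ) ≃L[ℝ] (Fin d → ℝ),
      HasFDerivAt ψ (e : (Fin d → ℝ) →L[ℝ] (Fin d → ℝ)) a := by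
    intro a ha
    have hca : ContDiffAt ℝ p ψ a := hψ.contDiffAt (hΩ.mem_nhds ha)
    have hda : DifferentiableAt ℝ ψ a := hca.differentiableAt hp'
    have hdet' : LinearMap.det ((fderiv ℝ ψ a) : (Fin d → ℝ) →ₗ[ℝ] (Fin d → ℝ)) ≠ 0 := by
      have := hdet a ha
      rwa [fderivWithin_of_isOpen hΩ ha] at this
    refine ⟨((fderiv ℝ ψ a : (Fin d → ℝ) →ₗ[ℝ] (Fin d → ℝ)).equivOfDetNeZero
      hdet').toContinuousLinearEquiv, ?_⟩
    convert hda.hasFDerivAt using 1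
    ext v; rfl
  -- the inverse map
  set σ := Function.invFunOn ψ Ω with hσdef
  have hσψ : ∀ y ∈ Ω, σ (ψ y) = y := fun y hy => hinj.leftInvOn_invFunOn hy
  have hopen : ∀ U ⊆ Ω, IsOpen U → IsOpen (ψ '' U) := by
    intro U hUΩ hU
    rw [isOpen_iff_mem_nhds]
    rintro b ⟨a, ha, rfl⟩
    obtain ⟨e, hfd⟩ := hDA a (hUΩ ha)
    have hca : ContDiffAt ℝ p ψ a := hψ.contDiffAt (hΩ.mem_nhds (hUΩ ha))
    have hs := hca.hasStrictFDerivAt' hfd hp'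
    rw [← hs.map_nhds_eq_of_equiv]
    exact Filter.image_mem_map (hU.mem_nhds ha)
  have hσ : ContDiffOn ℝ p σ (ψ '' Ω) := by
    rintro b ⟨a, ha, rfl⟩
    obtain ⟨e, hfd⟩ := hDA a ha
    have hca : ContDiffAt ℝ p ψ a := hψ.contDiffAt (hΩ.mem_nhds ha)
    have hs := hca.hasStrictFDerivAt' hfd hp'
    have hli : ContDiffAt ℝ p (hca.localInverse hfd hp') (ψ a) := hca.to_localInverse hfd hp'
    have hev : ∀ᶠ x in nhds a, σ (ψ x) = x :=
      Filter.eventually_of_mem (hΩ.mem_nhds ha) fun x hx => hσψ x hx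
    have key : ∀ᶠ y in nhds (ψ a), σ y = hca.localInverse hfd hp' y :=
      hs.localInverse_unique hev
    exact (hli.congr_of_eventuallyEq key).contDiffWithinAt
  have himgsub : ∀ n, ψ^[n] '' Ω ⊆ Ω := fun n => (hmapsn n).image_subset
  have himgopen : ∀ n, IsOpen (ψ^[n] '' Ω) := by
    intro n
    induction n with
    | zero => simpa using hΩ
    | succ k ih =>
        have h1 : ψ^[k+1] '' Ω = ψ '' (ψ^[k] '' Ω) := by
          rw [Function.iterate_succ']; exact Set.image_comp ψ (ψ^[k]) Ω
        rw [h1]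
        exact hopen _ (himgsub k) ih
  have hτ1 : ∀ n, ∀ y ∈ Ω, σ^[n] (ψ^[n] y) = y := by
    intro n
    induction n with
    | zero => intro y _; simp
    | succ k ih =>
        intro y hy
        have h1 : ψ^[k+1] y = ψ (ψ^[k] y) := Function.iterate_succ_apply' ψ k y
        have h2 : σ^[k+1] (ψ^[k+1] y) = σ^[k] (σ (ψ^[k+1] y)) :=
          Function.iterate_succ_apply σ k _
        rw [h2, h1, hσψ _ (hmapsn k hy), ih y hy]
  have hσn : ∀ n, ContDiffOn ℝ p (σ^[n]) (ψ^[n] '' Ω) := by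
    intro n
    induction n with
    | zero => simpa using contDiffOn_id
    | succ k ih =>
        have h1 : ψ^[k+1] '' Ω = ψ '' (ψ^[k] '' Ω) := by
          rw [Function.iterate_succ']; exact Set.image_comp ψ (ψ^[k]) Ω
        have hsub : ψ^[k+1] '' Ω ⊆ ψ '' Ω := by
          rw [h1]; exact Set.image_mono (himgsub k)
        have hmt : Set.MapsTo σ (ψ^[k+1] '' Ω) (ψ^[k] '' Ω) := by
          rintro z ⟨w, hw, rfl⟩
          have h2 : ψ^[k+1] w = ψ (ψ^[k] w) := Function.iterate_succ_apply' ψ k w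
          rw [h2, hσψ _ (hmapsn k hw)]
          exact ⟨w, hw, rfl⟩
        rw [Function.iterate_succ]
        exact ih.comp (hσ.mono hsub) hmt
  -- bump function
  obtain ⟨L, hLc, hKL, hLΩ⟩ := exists_compact_between hK hΩ hKΩ
  obtain ⟨χ, hχ0, hχ1, -⟩ := exists_contMDiffMap_zero_one_of_isClosed (n := (⊤ : ℕ∞)) 𝓘(ℝ, Fin d → ℝ)
    (isOpen_interior.isClosed_compl) hK.isClosed
    (by rw [Set.disjoint_compl_left_iff_subset]; exact hKL)
  have hχ : ContDiff ℝ (⊤ : ℕ∞) (χ : (Fin d → ℝ) → ℝ) := χ.contMDiff.contDiff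
  have hχp : ContDiff ℝ p (χ : (Fin d → ℝ) → ℝ) := hχ.of_le (by exact_mod_cast le_top)
  set C := tsupport (χ : (Fin d → ℝ) → ℝ) with hCdef
  have hCL : C ⊆ L := by
    apply closure_minimal ?_ hLc.isClosed
    intro x hx
    by_contra hxL
    exact hx (hχ0 (fun hint => hxL (interior_subset hint)))
  have hCc : IsCompact C := hLc.of_isClosed_subset (isClosed_tsupport _) hCL
  have hCΩ : C ⊆ Ω := hCL.trans hLΩ
  set F := fun x => (χ x : ℝ) • f x with hFdef
  have hF : ContDiffOn ℝ p F Ω := hχp.contDiffOn.smul hf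
  have hFC : ∀ x, x ∉ C → F x = 0 := by
    intro x hx
    simp [hFdef, image_eq_zero_of_notMem_tsupport hx]
  have hKC : K ⊆ C := fun x hx => subset_closure (by simp [Function.mem_support, hχ1 hx])
  have hFK : ∀ x ∈ K, F x = f x := fun x hx => by simp [hFdef, hχ1 hx]
  -- the period
  obtain ⟨N₀, hN₀⟩ := hsra C hCΩ hCc
  set N := N₀ + 1 with hNdef
  have hN1 : 1 ≤ N := Nat.le_add_left 1 N₀
  have hdis : ∀ y ∈ C, ∀ n, N ≤ n → ψ^[n] y ∉ C := by
    intro y hy n hn hc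
    have h1 := hN₀ n (by omega)
    rw [Set.eq_empty_iff_forall_notMem] at h1
    exact h1 (ψ^[n] y) ⟨⟨y, hy, rfl⟩, hc⟩
  -- the weight products
  set W : ℕ → (Fin d → ℝ) → 𝕂 := fun m x => ∏ j ∈ Finset.range m, ω (ψ^[j] x) with hWdef
  have hWc : ∀ m, ContDiffOn ℝ p (W m) Ω := by
    intro m
    induction m with
    | zero => simpa [hWdef] using contDiffOn_const
    | succ k ih =>
        have h1 : W (k+1) = fun x => W k x * ω (ψ^[k] x) := by
          funext x; simp only [hWdef]; exact Finset.prod_range_succ _ _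
        rw [h1]
        exact ih.mul (hω.comp (hiter k) (hmapsn k))
  have hW0 : ∀ m, ∀ x ∈ Ω, W m x ≠ 0 := by
    intro m x hx
    simp only [hWdef]
    exact Finset.prod_ne_zero_iff.mpr fun j _ => hω0 _ (hmapsn j hx)
  have hWadd : ∀ a b x, W (a + b) x = W a x * W b (ψ^[a] x) := by
    intro a b x
    simp only [hWdef, Finset.prod_range_add]
    congr 1
    refine Finset.prod_congr rfl fun j _ => ?_
    rw [add_comm a j, Function.iterate_add_apply]
  -- uniqueness lemmas
  have ufaux : ∀ x ∈ Ω, ∀ m k, ψ^[m*N] x ∈ C → ψ^[(m+k+1)*N] x ∈ C → False := by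
    intro x hx m k h1 h2
    have he : (m+k+1)*N = (k+1)*N + m*N := by ring
    rw [he, Function.iterate_add_apply] at h2
    exact hdis _ h1 ((k+1)*N) (Nat.le_mul_of_pos_left N (Nat.succ_pos k)) h2
  have uf : ∀ x ∈ Ω, ∀ m m', ψ^[m*N] x ∈ C → ψ^[m'*N] x ∈ C → m = m' := by
    intro x hx m m' h h'
    rcases lt_trichotomy m m' with hlt | heq | hgt
    · obtain ⟨k, rfl⟩ : ∃ k, m' = m + k + 1 := ⟨m' - m - 1, by omega⟩
      exact absurd (ufaux x hx m k h h') (fun h => h)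
    · exact heq
    · obtain ⟨k, rfl⟩ : ∃ k, m = m' + k + 1 := ⟨m - m' - 1, by omega⟩
      exact absurd (ufaux x hx m' k h' h) (fun h => h)
  have ubaux : ∀ x ∈ Ω, ∀ m k y y', y ∈ C → y' ∈ C → ψ^[(m+1)*N] y = x →
      ψ^[(m+k+2)*N] y' = x → False := by
    intro x hx m k y y' hy hy' h1 h2
    have he : (m+k+2)*N = (m+1)*N + (k+1)*N := by ring
    rw [he, Function.iterate_add_apply] at h2
    have h3 : y = ψ^[(k+1)*N] y' := by
      refine hinjn ((m+1)*N) (hCΩ hy) (hmapsn _ (hCΩ hy')) ?_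
      rw [h1, h2]
    exact hdis y' hy' ((k+1)*N) (Nat.le_mul_of_pos_left N (Nat.succ_pos k)) (h3 ▸ hy)
  have ub : ∀ x ∈ Ω, ∀ m m' y y', y ∈ C → y' ∈ C → ψ^[(m+1)*N] y = x →
      ψ^[(m'+1)*N] y' = x → m = m' ∧ y = y' := by
    intro x hx m m' y y' hy hy' h h'
    have hmm : m = m' := by
      rcases lt_trichotomy m m' with hlt | heq | hgt
      · obtain ⟨k, rfl⟩ : ∃ k, m' = m + k + 2 - 1 := ⟨m' - m - 1, by omega⟩
        have : m + k + 2 - 1 + 1 = m + k + 2 := by omega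
        rw [this] at h'
        exact absurd (ubaux x hx m k y y' hy hy' h h') (fun h => h)
      · exact heq
      · obtain ⟨k, rfl⟩ : ∃ k, m = m' + k + 2 - 1 := ⟨m - m' - 1, by omega⟩
        have : m' + k + 2 - 1 + 1 = m' + k + 2 := by omega
        rw [this] at h
        exact absurd (ubaux x hx m' k y' y hy' hy h' h) (fun h => h)
    subst hmm
    refine ⟨rfl, hinjn ((m+1)*N) (hCΩ hy) (hCΩ hy') ?_⟩
    rw [h, h']
  have uc : ∀ x ∈ Ω, ∀ m m' y, ψ^[m*N] x ∈ C → y ∈ C → ψ^[(m'+1)*N] y = x → False := by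
    intro x hx m m' y h1 hy h2
    have he : m*N + (m'+1)*N = (m+m'+1)*N := by ring
    have h3 : ψ^[(m+m'+1)*N] y ∈ C := by
      rw [← he, Function.iterate_add_apply, h2]; exact h1
    exact hdis y hy ((m+m'+1)*N) (Nat.le_mul_of_pos_left N (Nat.succ_pos _)) h3
  -- the function g
  set g : (Fin d → ℝ) → 𝕂 := fun x =>
    if hx : x ∈ Ω then
      if hf1 : ∃ m, ψ^[m*N] x ∈ C then
        W (hf1.choose * N) x * F (ψ^[hf1.choose * N] x)
      else if hb1 : ∃ m, x ∈ ψ^[(m+1)*N] '' C then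
        F (σ^[(hb1.choose+1)*N] x) * (W ((hb1.choose+1)*N) (σ^[(hb1.choose+1)*N] x))⁻¹
      else 0
    else 0
    with hgdef
  -- evaluation lemmas
  have gfwd : ∀ x ∈ Ω, ∀ m, ψ^[m*N] x ∈ C → g x = W (m*N) x * F (ψ^[m*N] x) := by
    intro x hx m hm
    have hex : ∃ m, ψ^[m*N] x ∈ C := ⟨m, hm⟩
    have hch : hex.choose = m := uf x hx _ m hex.choose_spec hm
    simp only [hgdef, dif_pos hx, dif_pos hex, hch]
  have gbwd : ∀ x ∈ Ω, (¬ ∃ m, ψ^[m*N] x ∈ C) → ∀ m y, y ∈ C → ψ^[(m+1)*N] y = x →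
      g x = F y * (W ((m+1)*N) y)⁻¹ := by
    intro x hx hnf m y hy hyx
    have hex : ∃ m, x ∈ ψ^[(m+1)*N] '' C := ⟨m, y, hy, hyx⟩
    obtain ⟨y₀, hy₀, h₀⟩ := hex.choose_spec
    obtain ⟨hch, hych⟩ := ub x hx hex.choose m y₀ y hy₀ hy h₀ hyx
    have hσx : σ^[(m+1)*N] x = y := by
      rw [← hyx, hτ1 _ y (hCΩ hy)]
    simp only [hgdef, dif_pos hx, dif_neg hnf, dif_pos hex, hch, hσx]
  have g0 : ∀ x ∈ Ω, (¬ ∃ m, ψ^[m*N] x ∈ C) → (¬ ∃ m, x ∈ ψ^[(m+1)*N] '' C) → g x = 0 := by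
    intro x hx hnf hnb
    simp only [hgdef, dif_pos hx, dif_neg hnf, dif_neg hnb]
  refine ⟨N, hN1, g, ?_, ?_, ?_⟩
  · -- smoothness of g
    intro x₀ hx₀
    suffices h : ContDiffAt ℝ p g x₀ from h.contDiffWithinAt
    -- a compact neighborhood of x₀ inside Ω
    obtain ⟨r, hr0, hrΩ⟩ := Metric.isOpen_iff.mp hΩ x₀ hx₀
    have hballΩ : Metric.closedBall x₀ (r/2) ⊆ Ω :=
      (Metric.closedBall_subset_ball (by linarith)).trans hrΩ
    obtain ⟨M, hM⟩ := hsra (C ∪ Metric.closedBall x₀ (r/2))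
      (Set.union_subset hCΩ hballΩ) (hCc.union (isCompact_closedBall x₀ (r/2)))
    -- local finiteness
    have LFf : ∀ x ∈ Metric.closedBall x₀ (r/2), ∀ k, ψ^[k*N] x ∈ C → k < M := by
      intro x hxb k hk
      by_contra hMk
      push_neg at hMk
      have h1 := hM (k*N) (le_trans hMk (Nat.le_mul_of_pos_right k (by omega)))
      rw [Set.eq_empty_iff_forall_notMem] at h1
      exact h1 (ψ^[k*N] x) ⟨⟨x, Or.inr hxb, rfl⟩, Or.inl hk⟩
    have LFb : ∀ x ∈ Metric.closedBall x₀ (r/2), ∀ m y, y ∈ C → ψ^[(m+1)*N] y = x →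
        m < M := by
      intro x hxb m y hy hyx
      by_contra hMm
      push_neg at hMm
      have hle : M ≤ (m+1)*N := le_trans (le_trans hMm (Nat.le_succ m))
        (Nat.le_mul_of_pos_right (m+1) (by omega))
      have h1 := hM ((m+1)*N) hle
      rw [Set.eq_empty_iff_forall_notMem] at h1
      exact h1 x ⟨⟨y, Or.inl hy, hyx⟩, Or.inr hxb⟩
    -- the good neighborhood
    set S₁ : Finset ℕ := (Finset.range M).filter (fun k => ψ^[k*N] x₀ ∉ C) with hS₁def
    set S₂ : Finset ℕ := (Finset.range M).filter
      (fun m => x₀ ∉ ψ^[(m+1)*N] '' C) with hS₂def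
    set V : Set (Fin d → ℝ) := Metric.ball x₀ (r/2) ∩
      ((⋂ k ∈ S₁, (Ω ∩ ψ^[k*N] ⁻¹' Cᶜ)) ∩ ⋂ m ∈ S₂, (ψ^[(m+1)*N] '' C)ᶜ) with hVdef
    have hVopen : IsOpen V := by
      refine Metric.isOpen_ball.inter (IsOpen.inter ?_ ?_)
      · refine isOpen_biInter_finset fun k _ => ?_
        exact (hiter (k*N)).continuousOn.isOpen_inter_preimage hΩ hCc.isClosed.isOpen_compl
      · refine isOpen_biInter_finset fun m _ => ?_
        exact (IsCompact.image_of_continuousOn hCc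
          ((hiter ((m+1)*N)).continuousOn.mono hCΩ)).isClosed.isOpen_compl
    have hx₀V : x₀ ∈ V := by
      refine ⟨Metric.mem_ball_self (by linarith), ?_, ?_⟩
      · refine Set.mem_iInter₂.mpr fun k hk => ⟨hx₀, ?_⟩
        have := (Finset.mem_filter.mp hk).2
        simpa using this
      · refine Set.mem_iInter₂.mpr fun m hm => ?_
        exact (Finset.mem_filter.mp hm).2
    have hVΩ : V ⊆ Ω := fun x hxV =>
      hballΩ (Metric.ball_subset_closedBall hxV.1)
    have hVb : V ⊆ Metric.closedBall x₀ (r/2) := fun x hxV =>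
      Metric.ball_subset_closedBall hxV.1
    have hVnofwd : ∀ x ∈ V, ∀ k, ψ^[k*N] x ∈ C → ψ^[k*N] x₀ ∈ C := by
      intro x hxV k hk
      by_contra h0
      have hkM : k < M := LFf x (hVb hxV) k hk
      have hk1 : k ∈ S₁ := Finset.mem_filter.mpr ⟨Finset.mem_range.mpr hkM, h0⟩
      have := Set.mem_iInter₂.mp hxV.2.1 k hk1
      exact this.2 hk
    have hVnobwd : ∀ x ∈ V, ∀ m y, y ∈ C → ψ^[(m+1)*N] y = x →
        x₀ ∈ ψ^[(m+1)*N] '' C := by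
      intro x hxV m y hy hyx
      by_contra h0
      have hmM : m < M := LFb x (hVb hxV) m y hy hyx
      have hm2 : m ∈ S₂ := Finset.mem_filter.mpr ⟨Finset.mem_range.mpr hmM, h0⟩
      have := Set.mem_iInter₂.mp hxV.2.2 m hm2
      exact this ⟨y, hy, hyx⟩
    -- case analysis on x₀
    by_cases hF0 : ∃ k, ψ^[k*N] x₀ ∈ C
    · -- forward case
      obtain ⟨k₀, hk₀⟩ := hF0
      have hmodel : ContDiffOn ℝ p (fun x => W (k₀*N) x * F (ψ^[k₀*N] x)) Ω :=
        (hWc (k₀*N)).mul (hF.comp (hiter (k₀*N)) (hmapsn (k₀*N)))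
      have heq : ∀ x ∈ V, g x = W (k₀*N) x * F (ψ^[k₀*N] x) := by
        intro x hxV
        have hxΩ : x ∈ Ω := hVΩ hxV
        by_cases hc : ψ^[k₀*N] x ∈ C
        · exact gfwd x hxΩ k₀ hc
        · have hnf : ¬ ∃ k, ψ^[k*N] x ∈ C := by
            rintro ⟨k, hk⟩
            have h1 : ψ^[k*N] x₀ ∈ C := hVnofwd x hxV k hk
            have : k = k₀ := uf x₀ hx₀ k k₀ h1 hk₀
            exact hc (this ▸ hk)
          have hnb : ¬ ∃ m, x ∈ ψ^[(m+1)*N] '' C := by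
            rintro ⟨m, y, hy, hyx⟩
            obtain ⟨y₀, hy₀, h₀⟩ := hVnobwd x hxV m y hy hyx
            exact uc x₀ hx₀ k₀ m y₀ hk₀ hy₀ h₀
          rw [g0 x hxΩ hnf hnb, hFC _ hc, mul_zero]
      refine ContDiffAt.congr_of_eventuallyEq
        (hmodel.contDiffAt (hΩ.mem_nhds hx₀)) ?_
      exact Filter.eventually_of_mem (hVopen.mem_nhds hx₀V) heq
    · by_cases hB0 : ∃ m, x₀ ∈ ψ^[(m+1)*N] '' C
      · -- backward case
        obtain ⟨m₀, y₀, hy₀, hx₀y⟩ := hB0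
        set n := (m₀+1)*N with hndef
        have hx₀O : x₀ ∈ ψ^[n] '' Ω := ⟨y₀, hCΩ hy₀, hx₀y⟩
        have hmodel : ContDiffOn ℝ p
            (fun z => F (σ^[n] z) * (W n (σ^[n] z))⁻¹) (ψ^[n] '' Ω) := by
          have hmt : Set.MapsTo (σ^[n]) (ψ^[n] '' Ω) Ω := by
            rintro z ⟨w, hw, rfl⟩
            rw [hτ1 n w hw]
            exact hw
          exact (hF.comp (hσn n) hmt).mul
            (((hWc n).comp (hσn n) hmt).inv (fun z hz => hW0 n _ (hmt hz)))
        have heq : ∀ x ∈ V ∩ ψ^[n] '' Ω, g x = F (σ^[n] x) * (W n (σ^[n] x))⁻¹ := by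
          rintro x ⟨hxV, w, hwΩ, rfl⟩
          have hxΩ : ψ^[n] w ∈ Ω := himgsub n ⟨w, hwΩ, rfl⟩
          have hσw : σ^[n] (ψ^[n] w) = w := hτ1 n w hwΩ
          have hnf : ¬ ∃ k, ψ^[k*N] (ψ^[n] w) ∈ C := by
            rintro ⟨k, hk⟩
            exact hF0 ⟨k, hVnofwd _ hxV k hk⟩
          rw [hσw]
          by_cases hwC : w ∈ C
          · exact gbwd _ hxΩ hnf m₀ w hwC rfl
          · have hnb : ¬ ∃ m, ψ^[n] w ∈ ψ^[(m+1)*N] '' C := by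
              rintro ⟨m, y, hy, hyx⟩
              obtain ⟨y₁, hy₁, h₁⟩ := hVnobwd _ hxV m y hy hyx
              obtain ⟨hm, -⟩ := ub x₀ hx₀ m m₀ y₁ y₀ hy₁ hy₀ h₁ hx₀y
              subst hm
              have : y = w := hinjn n (hCΩ hy) hwΩ hyx
              exact hwC (this ▸ hy)
            rw [g0 _ hxΩ hnf hnb, hFC _ hwC, zero_mul]
        have hmem : V ∩ ψ^[n] '' Ω ∈ nhds x₀ :=
          (hVopen.inter (himgopen n)).mem_nhds ⟨hx₀V, hx₀O⟩
        refine ContDiffAt.congr_of_eventuallyEq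
          (hmodel.contDiffAt ((himgopen n).mem_nhds hx₀O)) ?_
        exact Filter.eventually_of_mem hmem heq
      · -- zero case
        have heq : ∀ x ∈ V, g x = 0 := by
          intro x hxV
          have hxΩ : x ∈ Ω := hVΩ hxV
          have hnf : ¬ ∃ k, ψ^[k*N] x ∈ C := by
            rintro ⟨k, hk⟩
            exact hF0 ⟨k, hVnofwd x hxV k hk⟩
          have hnb : ¬ ∃ m, x ∈ ψ^[(m+1)*N] '' C := by
            rintro ⟨m, y, hy, hyx⟩
            exact hB0 ⟨m, hVnobwd x hxV m y hy hyx⟩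
          exact g0 x hxΩ hnf hnb
        refine ContDiffAt.congr_of_eventuallyEq
          (contDiffAt_const (c := (0:𝕂))) ?_
        exact Filter.eventually_of_mem (hVopen.mem_nhds hx₀V) heq
  · -- g = f on K
    intro x hx
    have hx0 : ψ^[0*N] x ∈ C := by
      simpa using hKC hx
    rw [gfwd x (hKΩ hx) 0 hx0]
    simp only [Nat.zero_mul, Function.iterate_zero, id_eq, hWdef, Finset.range_zero,
      Finset.prod_empty, one_mul]
    exact hFK x hx
  · -- the eigen-equation
    intro x hx
    have hxN : ψ^[N] x ∈ Ω := hmapsn N hx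
    have hshift : ∀ k, ψ^[k*N] (ψ^[N] x) = ψ^[(k+1)*N] x := by
      intro k
      rw [← Function.iterate_add_apply]
      congr 1
      ring
    have hWN : (∏ j ∈ Finset.range N, ω (ψ^[j] x)) = W N x := rfl
    rw [hWN]
    by_cases hfwd : ∃ m, ψ^[m*N] x ∈ C
    · obtain ⟨m, hm⟩ := hfwd
      rcases Nat.eq_zero_or_pos m with rfl | hmpos
      · -- x ∈ C
        have hxC : x ∈ C := by simpa using hm
        have hnf : ¬ ∃ k, ψ^[k*N] (ψ^[N] x) ∈ C := by
          rintro ⟨k, hk⟩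
          rw [hshift k] at hk
          exact absurd (uf x hx 0 (k+1) hm hk) (by omega)
        have hb : ψ^[(0+1)*N] x = ψ^[N] x := by norm_num
        rw [gbwd (ψ^[N] x) hxN hnf 0 x hxC hb]
        rw [gfwd x hx 0 hm]
        have hW : W N x ≠ 0 := hW0 N x hx
        have h1 : (0+1)*N = N := by norm_num
        rw [h1]
        simp only [Nat.zero_mul, Function.iterate_zero, id_eq]
        have hW0' : W 0 x = 1 := by simp [hWdef]
        rw [hW0', one_mul, mul_comm (F x) ((W N x)⁻¹), ← mul_assoc, mul_inv_cancel₀ hW, one_mul]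
      · obtain ⟨m', rfl⟩ : ∃ m', m = m' + 1 := ⟨m - 1, by omega⟩
        have hk : ψ^[m'*N] (ψ^[N] x) ∈ C := by rw [hshift m']; exact hm
        rw [gfwd (ψ^[N] x) hxN m' hk, gfwd x hx (m'+1) hm]
        rw [hshift m']
        have he : (m'+1)*N = N + m'*N := by ring
        rw [he, hWadd N (m'*N) x]
        ring
    · by_cases hbwd : ∃ m, x ∈ ψ^[(m+1)*N] '' C
      · obtain ⟨m, y, hy, hyx⟩ := hbwd
        have hnf : ¬ ∃ k, ψ^[k*N] (ψ^[N] x) ∈ C := by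
          rintro ⟨k, hk⟩
          rw [hshift k] at hk
          exact hfwd ⟨k+1, hk⟩
        have hb2 : ψ^[(m+1+1)*N] y = ψ^[N] x := by
          have he : (m+1+1)*N = N + (m+1)*N := by ring
          rw [he, Function.iterate_add_apply, hyx]
        rw [gbwd (ψ^[N] x) hxN hnf (m+1) y hy hb2]
        rw [gbwd x hx hfwd m y hy hyx]
        have he2 : (m+1+1)*N = (m+1)*N + N := by ring
        rw [he2, hWadd ((m+1)*N) N y, hyx]
        have h1 : W ((m+1)*N) y ≠ 0 := hW0 _ y (hCΩ hy)
        have h2 : W N x ≠ 0 := hW0 N x hx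
        field_simp
      · have hnf : ¬ ∃ k, ψ^[k*N] (ψ^[N] x) ∈ C := by
          rintro ⟨k, hk⟩
          rw [hshift k] at hk
          exact hfwd ⟨k+1, hk⟩
        have hnb : ¬ ∃ m, ψ^[N] x ∈ ψ^[(m+1)*N] '' C := by
          rintro ⟨m, y, hy, hyx⟩
          rcases Nat.eq_zero_or_pos m with rfl | hmpos
          · have h1 : ψ^[(0+1)*N] y = ψ^[N] y := by norm_num
            rw [h1] at hyx
            have : y = x := hinjn N (hCΩ hy) hx hyx
            exact hfwd ⟨0, by simpa [this ▸ hy] using (this ▸ hy)⟩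
          · obtain ⟨m', rfl⟩ : ∃ m', m = m' + 1 := ⟨m - 1, by omega⟩
            have he : (m'+1+1)*N = N + (m'+1)*N := by ring
            rw [he, Function.iterate_add_apply] at hyx
            have : ψ^[(m'+1)*N] y = x := hinjn N (hmapsn _ (hCΩ hy)) hx hyx
            exact hbwd ⟨m', y, hy, this⟩
        rw [g0 (ψ^[N] x) hxN hnf hnb, g0 x hx hfwd hbwd, mul_zero]
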